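/- Finite termination of column-and-constraint generation with an exact oracle: let V ⊆ ℝ^N be finite and nonempty, U = convexHull ℝ V, and X = { x ∈ ℝ^d : B x ≤ b } nonempty. Suppose there are maps xsel, assigning to each nonempty finite S ⊆ V a point xsel(S) ∈ X attaining inf_{x ∈ X} ( c ⬝ x + sup_{ξ ∈ S} Q̂(x, ξ) ), and ξsel, assigning to each x ∈ X a vertex ξsel(x) ∈ V with Q̂(x, ξsel(x)) = sup_{ξ ∈ U} Q̂(x, ξ). Fix v₀ ∈ V and define S₀ = {v₀} and S_{j+1} = S_j ∪ { ξsel(xsel(S_j)) }. Then there exists j ≤ |V| such that ξsel(xsel(S_j)) ∈ S_j, and for this j the point xsel(S_j) attains inf_{x ∈ X} ( c ⬝ x + sup_{ξ ∈ U} Q̂(x, ξ) ). -/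

import Mathlib

open Matrix

/-- Second-stage (recourse) value function:
`Q̂(x, ξ) = inf { c_viol ⬝ s : p, s, s ≥ 0, H x + D p − s ≤ E ξ + h }`. -/
noncomputable def Qhat {d g m N : ℕ} (H : Matrix (Fin m) (Fin d) ℝ)
    (D : Matrix (Fin m) (Fin g) ℝ) (E : Matrix (Fin m) (Fin N) ℝ)
    (h : Fin m → ℝ) (cviol : Fin m → ℝ) (x : Fin d → ℝ) (ξ : Fin N → ℝ) : ℝ :=
  sInf { v : ℝ | ∃ (p : Fin g → ℝ) (s : Fin m → ℝ),
    (∀ i, 0 ≤ s i) ∧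
    (∀ i, (H.mulVec x + D.mulVec p - s) i ≤ (E.mulVec ξ + h) i) ∧
    v = cviol ⬝ᵥ s }

namespace CCGaux

variable {d g m N : ℕ} (H : Matrix (Fin m) (Fin d) ℝ) (D : Matrix (Fin m) (Fin g) ℝ)
  (E : Matrix (Fin m) (Fin N) ℝ) (h : Fin m → ℝ) (cviol : Fin m → ℝ)

def Qset (x : Fin d → ℝ) (ξ : Fin N → ℝ) : Set ℝ :=
  { v : ℝ | ∃ (p : Fin g → ℝ) (s : Fin m → ℝ),
    (∀ i, 0 ≤ s i) ∧
    (∀ i, (H.mulVec x + D.mulVec p - s) i ≤ (E.mulVec ξ + h) i) ∧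
    v = cviol ⬝ᵥ s }

lemma Qhat_eq (x : Fin d → ℝ) (ξ : Fin N → ℝ) :
    Qhat H D E h cviol x ξ = sInf (Qset H D E h cviol x ξ) := rfl

lemma Qset_nonempty (x : Fin d → ℝ) (ξ : Fin N → ℝ) :
    (Qset H D E h cviol x ξ).Nonempty := by
  refine ⟨_, 0, fun i => max 0 ((H.mulVec x + D.mulVec 0 - (E.mulVec ξ + h)) i),
    fun i => le_max_left _ _, ?_, rfl⟩
  intro i
  have := le_max_right (0:ℝ) ((H.mulVec x + D.mulVec 0 - (E.mulVec ξ + h)) i)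
  simp only [Pi.sub_apply, Pi.add_apply] at this ⊢
  linarith

lemma Qset_lb (hc : ∀ i, 0 ≤ cviol i) (x : Fin d → ℝ) (ξ : Fin N → ℝ) :
    ∀ v ∈ Qset H D E h cviol x ξ, 0 ≤ v := by
  rintro v ⟨p, s, hs, -, rfl⟩
  exact Finset.sum_nonneg fun i _ => mul_nonneg (hc i) (hs i)

lemma Qset_bddBelow (hc : ∀ i, 0 ≤ cviol i) (x : Fin d → ℝ) (ξ : Fin N → ℝ) :
    BddBelow (Qset H D E h cviol x ξ) :=
  ⟨0, fun v hv => Qset_lb H D E h cviol hc x ξ v hv⟩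

/-- Primal shift bound: `Q(x,ξ') ≤ Q(x,ξ) + cviol ⬝ (E ξ − E ξ')⁺`. -/
lemma Qhat_shift (hc : ∀ i, 0 ≤ cviol i) (x : Fin d → ℝ) (ξ ξ' : Fin N → ℝ) :
    Qhat H D E h cviol x ξ' ≤ Qhat H D E h cviol x ξ +
      cviol ⬝ᵥ (fun i => max 0 ((E.mulVec ξ - E.mulVec ξ') i)) := by
  set t : Fin m → ℝ := fun i => max 0 ((E.mulVec ξ - E.mulVec ξ') i) with ht
  rw [Qhat_eq, Qhat_eq]
  have hkey : ∀ v ∈ Qset H D E h cviol x ξ,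
      sInf (Qset H D E h cviol x ξ') ≤ v + cviol ⬝ᵥ t := by
    rintro v ⟨p, s, hs, hcon, rfl⟩
    have hmem : cviol ⬝ᵥ (s + t) ∈ Qset H D E h cviol x ξ' := by
      refine ⟨p, s + t, fun i => add_nonneg (hs i) (le_max_left _ _), ?_, rfl⟩
      intro i
      have h1 := hcon i
      have h2 : (E.mulVec ξ - E.mulVec ξ') i ≤ t i := le_max_right _ _
      simp only [ht, Pi.sub_apply, Pi.add_apply] at h1 h2 ⊢
      linarith
    have h3 := csInf_le (Qset_bddBelow H D E h cviol hc x ξ') hmem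
    rwa [dotProduct_add] at h3
  have h4 : sInf (Qset H D E h cviol x ξ') - cviol ⬝ᵥ t ≤ sInf (Qset H D E h cviol x ξ) :=
    le_csInf (Qset_nonempty H D E h cviol x ξ) (fun v hv => by linarith [hkey v hv])
  linarith

end CCGaux
/-- Finite termination of column-and-constraint generation with an exact
adversarial oracle: within at most `|V|` iterations the worst-case vertex
returned by the oracle is already in the scenario set, and the corresponding
master solution is optimal for the full adaptive robust problem over
`U = convexHull ℝ V`. -/
theorem ccg_finite_termination
    {d g m N q : ℕ}
    (H : Matrix (Fin m) (Fin d) ℝ) (D : Matrix (Fin m) (Fin g) ℝ)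
    (E : Matrix (Fin m) (Fin N) ℝ) (h : Fin m → ℝ) (cviol : Fin m → ℝ)
    (hcviol : ∀ i, 0 ≤ cviol i)
    (B : Matrix (Fin q) (Fin d) ℝ) (b : Fin q → ℝ) (c : Fin d → ℝ)
    (X : Set (Fin d → ℝ)) (hX : X = { x | ∀ i, B.mulVec x i ≤ b i })
    (hXne : X.Nonempty)
    (V : Set (Fin N → ℝ)) (hVfin : V.Finite) (hVne : V.Nonempty)
    (xsel : Set (Fin N → ℝ) → (Fin d → ℝ))
    (hxsel : ∀ S : Set (Fin N → ℝ), S.Nonempty → S ⊆ V →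
      xsel S ∈ X ∧
      c ⬝ᵥ xsel S + sSup ((fun ξ => Qhat H D E h cviol (xsel S) ξ) '' S) =
        sInf ((fun x => c ⬝ᵥ x + sSup ((fun ξ => Qhat H D E h cviol x ξ) '' S)) '' X))
    (ξsel : (Fin d → ℝ) → (Fin N → ℝ))
    (hξsel : ∀ x ∈ X, ξsel x ∈ V ∧
      Qhat H D E h cviol x (ξsel x) =
        sSup ((fun ξ => Qhat H D E h cviol x ξ) '' (convexHull ℝ V)))
    (v₀ : Fin N → ℝ) (hv₀ : v₀ ∈ V)
    (S : ℕ → Set (Fin N → ℝ))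
    (hS0 : S 0 = {v₀})
    (hSsucc : ∀ j, S (j + 1) = S j ∪ {ξsel (xsel (S j))}) :
    ∃ j ≤ V.ncard, ξsel (xsel (S j)) ∈ S j ∧
      c ⬝ᵥ xsel (S j) +
          sSup ((fun ξ => Qhat H D E h cviol (xsel (S j)) ξ) '' (convexHull ℝ V)) =
        sInf ((fun x => c ⬝ᵥ x +
          sSup ((fun ξ => Qhat H D E h cviol x ξ) '' (convexHull ℝ V))) '' X) := by
  classical
  set U : Set (Fin N → ℝ) := convexHull ℝ V with hU
  set Q : (Fin d → ℝ) → (Fin N → ℝ) → ℝ := Qhat H D E h cviol with hQ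
  -- basic structure of the scenario sets
  have hSV : ∀ j, (S j).Nonempty ∧ S j ⊆ V := by
    intro j
    induction j with
    | zero =>
      rw [hS0]
      exact ⟨⟨v₀, rfl⟩, by simpa using hv₀⟩
    | succ j ih =>
      rw [hSsucc]
      refine ⟨ih.1.mono Set.subset_union_left, Set.union_subset ih.2 ?_⟩
      have hx := hxsel (S j) ih.1 ih.2
      simpa using (hξsel _ hx.1).1
  have hv0S : ∀ j, v₀ ∈ S j := by
    intro j
    induction j with
    | zero => rw [hS0]; rfl
    | succ j ih => rw [hSsucc]; exact Set.subset_union_left ih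
  -- finite termination of the index search
  have hterm : ∃ j ≤ V.ncard, ξsel (xsel (S j)) ∈ S j := by
    by_contra hcon
    push_neg at hcon
    have hcard : ∀ j, j ≤ V.ncard → j + 1 ≤ (S j).ncard := by
      intro j
      induction j with
      | zero => intro _; rw [hS0]; simp
      | succ j ih =>
        intro hj
        have hj' : j ≤ V.ncard := by omega
        have h1 := ih hj'
        rw [hSsucc, Set.union_singleton,
          Set.ncard_insert_of_notMem (hcon j hj') (hVfin.subset (hSV j).2)]
        omega
    have h2 := hcard V.ncard le_rfl
    have h3 : (S V.ncard).ncard ≤ V.ncard := Set.ncard_le_ncard (hSV _).2 hVfin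
    omega
  obtain ⟨j, hj, hmem⟩ := hterm
  refine ⟨j, hj, hmem, ?_⟩
  -- uniform bound on the gap between the hull supremum and Q(·, v₀)
  have hUcpt : IsCompact U := hVfin.isCompact_convexHull ℝ
  set gfun : (Fin N → ℝ) → ℝ :=
    fun ξ => cviol ⬝ᵥ (fun i => max 0 ((E.mulVec v₀ - E.mulVec ξ) i)) with hgfun
  have hgcont : Continuous gfun := by
    rw [hgfun]
    simp only [dotProduct, Matrix.mulVec, Pi.sub_apply]
    refine continuous_finset_sum _ fun i _ => Continuous.mul continuous_const ?_
    refine Continuous.max continuous_const (Continuous.sub continuous_const ?_)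
    exact continuous_finset_sum _ fun k _ => continuous_const.mul (continuous_apply k)
  obtain ⟨Mg, hMg⟩ := (hUcpt.image hgcont).bddAbove
  have hgMg : ∀ ξ ∈ U, gfun ξ ≤ Mg := fun ξ hξ => hMg ⟨ξ, hξ, rfl⟩
  have hv₀U : v₀ ∈ U := subset_convexHull ℝ V hv₀
  have hQleU : ∀ x : Fin d → ℝ, ∀ ξ ∈ U, Q x ξ ≤ Q x v₀ + Mg := by
    intro x ξ hξ
    have h1 := CCGaux.Qhat_shift H D E h cviol hcviol x v₀ ξ
    have h2 := hgMg ξ hξ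
    rw [hgfun] at h2
    simp only [hQ]
    linarith
  have hbddU : ∀ x : Fin d → ℝ, BddAbove ((fun ξ => Q x ξ) '' U) := by
    intro x
    refine ⟨Q x v₀ + Mg, ?_⟩
    rintro _ ⟨ξ, hξ, rfl⟩
    exact hQleU x ξ hξ
  have hSubU : S j ⊆ U := (hSV j).2.trans (subset_convexHull ℝ V)
  have hbddS : ∀ x : Fin d → ℝ, BddAbove ((fun ξ => Q x ξ) '' S j) :=
    fun x => (hbddU x).mono (Set.image_mono hSubU)
  set x₀ : Fin d → ℝ := xsel (S j) with hx₀
  have hx := hxsel (S j) (hSV j).1 (hSV j).2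
  have hξ := hξsel x₀ hx.1
  -- the hull supremum equals the scenario-set supremum at the returned point
  have hsupx : ∀ x : Fin d → ℝ,
      sSup ((fun ξ => Q x ξ) '' S j) ≤ sSup ((fun ξ => Q x ξ) '' U) :=
    fun x => csSup_le_csSup (hbddU x) ⟨Q x v₀, v₀, hv0S j, rfl⟩
      (Set.image_mono hSubU)
  have hsup_eq : sSup ((fun ξ => Q x₀ ξ) '' U) = sSup ((fun ξ => Q x₀ ξ) '' S j) := by
    refine le_antisymm ?_ (hsupx x₀)
    rw [← hξ.2]
    exact le_csSup (hbddS x₀) ⟨ξsel x₀, hmem, rfl⟩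
  -- sup over hull is within Mg of sup over scenarios, uniformly in x
  have hsup_le : ∀ x : Fin d → ℝ,
      sSup ((fun ξ => Q x ξ) '' U) ≤ sSup ((fun ξ => Q x ξ) '' S j) + Mg := by
    intro x
    refine csSup_le ⟨Q x v₀, v₀, hv₀U, rfl⟩ ?_
    rintro _ ⟨ξ, hξU, rfl⟩
    have h1 := hQleU x ξ hξU
    have h2 : Q x v₀ ≤ sSup ((fun ξ => Q x ξ) '' S j) :=
      le_csSup (hbddS x) ⟨v₀, hv0S j, rfl⟩
    linarith
  -- compare the two infima
  have hFS_le_F : ∀ x : Fin d → ℝ,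
      c ⬝ᵥ x + sSup ((fun ξ => Q x ξ) '' S j) ≤ c ⬝ᵥ x + sSup ((fun ξ => Q x ξ) '' U) :=
    fun x => add_le_add_right (hsupx x) _
  set FS : (Fin d → ℝ) → ℝ := fun x => c ⬝ᵥ x + sSup ((fun ξ => Q x ξ) '' S j) with hFS
  set F : (Fin d → ℝ) → ℝ := fun x => c ⬝ᵥ x + sSup ((fun ξ => Q x ξ) '' U) with hF
  have hinf_eq : sInf (FS '' X) = sInf (F '' X) := by
    by_cases hbb : BddBelow (FS '' X)
    · have hlb : ∀ y ∈ F '' X, sInf (FS '' X) ≤ y := by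
        rintro _ ⟨x, hxX, rfl⟩
        exact (csInf_le hbb ⟨x, hxX, rfl⟩).trans (hFS_le_F x)
      have h1 : sInf (FS '' X) ≤ sInf (F '' X) :=
        le_csInf (hXne.image F) hlb
      have hbbF : BddBelow (F '' X) := ⟨sInf (FS '' X), hlb⟩
      refine le_antisymm h1 ?_
      calc sInf (F '' X) ≤ F x₀ := csInf_le hbbF ⟨x₀, hx.1, rfl⟩
        _ = FS x₀ := by simp only [hF, hFS]; rw [hsup_eq]
        _ = sInf (FS '' X) := hx.2
    · have hbbF : ¬ BddBelow (F '' X) := by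
        rintro ⟨r, hr⟩
        refine hbb ⟨r - Mg, ?_⟩
        rintro _ ⟨x, hxX, rfl⟩
        have h1 : r ≤ F x := hr ⟨x, hxX, rfl⟩
        have h2 := hsup_le x
        simp only [hF, hFS] at h1 ⊢
        linarith
      rw [Real.sInf_of_not_bddBelow hbb, Real.sInf_of_not_bddBelow hbbF]
  calc c ⬝ᵥ x₀ + sSup ((fun ξ => Q x₀ ξ) '' U)
      = c ⬝ᵥ x₀ + sSup ((fun ξ => Q x₀ ξ) '' S j) := by rw [hsup_eq]
    _ = sInf (FS '' X) := hx.2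
    _ = sInf (F '' X) := hinf_eq
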